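/- Let $\alpha\in(0,1)$, $\lambda>0$, $p_0\ge 0$, $T>0$, and let $w\in C^1([0,T])$ satisfy $w'(t) + p_0\,\partial_t^\alpha w(t) + \lambda w(t)\le 0$ for all $t\in(0,T]$ and $w(0)\le 0$. Then $w(t)\le 0$ for all $t\in(0,T]$. -/

import Mathlib

open Real MeasureTheory intervalIntegral

/-- Caputo fractional derivative of order `α` of `φ` at `t`. -/
noncomputable def caputoDeriv (α : ℝ) (φ : ℝ → ℝ) (t : ℝ) : ℝ :=
  (1 / Real.Gamma (1 - α)) * ∫ τ in (0:ℝ)..t, (t - τ) ^ (-α) * deriv φ τ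

private lemma rpow_mul_self {s e : ℝ} (hs : 0 ≤ s) (he : e ≠ 0) (he1 : e + 1 ≠ 0) :
    s ^ e * s = s ^ (e + 1) := by
  rcases eq_or_lt_of_le hs with h | h
  · simp [← h, Real.zero_rpow he, Real.zero_rpow he1]
  · nth_rewrite 2 [← Real.rpow_one s]
    rw [← Real.rpow_add h]

/-- Maximum principle / comparison for the mixed-order fractional ODE (Lemma 4.2, smooth case). -/
theorem mixed_fractional_maximum_principle
    (α lam p₀ T : ℝ) (hα : α ∈ Set.Ioo (0:ℝ) 1) (hlam : 0 < lam) (hp₀ : 0 ≤ p₀) (hT : 0 < T)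
    (w : ℝ → ℝ) (hw : ContDiff ℝ 1 w)
    (hineq : ∀ t, t ∈ Set.Ioc 0 T →
      deriv w t + p₀ * caputoDeriv α w t + lam * w t ≤ 0)
    (h0 : w 0 ≤ 0) :
    ∀ t, t ∈ Set.Ioc 0 T → w t ≤ 0 := by
  obtain ⟨hα0, hα1⟩ := hα
  have hαne : -α ≠ 0 := neg_ne_zero.2 hα0.ne'
  have hdiff : Differentiable ℝ w := hw.differentiable one_ne_zero
  have hcd : Continuous (deriv w) := hw.continuous_deriv le_rfl
  by_contra hcon
  push_neg at hcon
  obtain ⟨t₁, ht₁, hw₁⟩ := hcon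
  -- maximum point on [0, T]
  obtain ⟨t₀, ht₀mem, ht₀max⟩ :=
    isCompact_Icc.exists_isMaxOn (Set.nonempty_Icc.2 hT.le)
      (hw.continuous.continuousOn (s := Set.Icc 0 T))
  have hmax : ∀ τ ∈ Set.Icc (0:ℝ) T, w τ ≤ w t₀ := ht₀max
  have hM : 0 < w t₀ := lt_of_lt_of_le hw₁ (hmax t₁ ⟨ht₁.1.le, ht₁.2⟩)
  have ht₀pos : 0 < t₀ := by
    rcases eq_or_lt_of_le ht₀mem.1 with h | h
    · exfalso; rw [← h] at hM; linarith
    · exact h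
  -- Lipschitz bound
  obtain ⟨L, hL⟩ := isCompact_Icc.exists_bound_of_continuousOn
      (hcd.continuousOn : ContinuousOn (deriv w) (Set.Icc 0 T))
  have hL0 : 0 ≤ L := le_trans (norm_nonneg _) (hL 0 ⟨le_rfl, hT.le⟩)
  have hLip : ∀ τ ∈ Set.Icc (0:ℝ) t₀, |w τ - w t₀| ≤ L * (t₀ - τ) := by
    intro τ hτ
    have hsub : Set.Icc (0:ℝ) t₀ ⊆ Set.Icc 0 T :=
      Set.Icc_subset_Icc le_rfl ht₀mem.2
    have := Convex.norm_image_sub_le_of_norm_deriv_le (s := Set.Icc (0:ℝ) t₀) (f := w)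
      (fun x _ => hdiff x) (fun x hx => hL x (hsub hx)) (convex_Icc _ _)
      hτ (Set.right_mem_Icc.2 (le_trans hτ.1 hτ.2))
    rw [abs_sub_comm]
    simpa [Real.norm_eq_abs, abs_of_nonneg (sub_nonneg.2 hτ.2)] using this
  -- functions
  set A : ℝ → ℝ := fun τ => (t₀ - τ) ^ (-α) * deriv w τ with hA
  set B : ℝ → ℝ := fun τ => (α * (t₀ - τ) ^ (-α - 1)) * (w τ - w t₀) with hB
  set G : ℝ → ℝ := fun τ => (t₀ - τ) ^ (-α) * (w τ - w t₀) with hG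
  have hGt₀ : G t₀ = 0 := by simp [hG]
  -- derivative of G
  have hderG : ∀ x ∈ Set.Ioo (0:ℝ) t₀, HasDerivAt G (B x + A x) x := by
    intro x hx
    have hxt : (0:ℝ) < t₀ - x := by linarith [hx.2]
    have h1 : HasDerivAt (fun τ : ℝ => t₀ - τ) (-1) x := (hasDerivAt_id x).const_sub t₀
    have h2 : HasDerivAt (fun τ : ℝ => (t₀ - τ) ^ (-α))
        ((-α * (t₀ - x) ^ (-α - 1)) * (-1)) x := by
      exact (Real.hasDerivAt_rpow_const (Or.inl hxt.ne')).comp x h1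
    have h3 : HasDerivAt (fun τ : ℝ => w τ - w t₀) (deriv w x) x :=
      ((hdiff x).hasDerivAt).sub_const (w t₀)
    have := h2.mul h3
    convert this using 1
    · rfl
    · rfl
    · rfl
    simp only [hA, hB]
    ring
  -- continuity of G on [0, t₀]
  have hcontG : ContinuousOn G (Set.Icc 0 t₀) := by
    intro x hx
    rcases eq_or_lt_of_le hx.2 with hx2 | hx2
    · -- x = t₀ : squeeze
      rw [hx2]
      show Filter.Tendsto G (nhdsWithin t₀ (Set.Icc 0 t₀)) (nhds (G t₀))
      rw [hGt₀]
      apply squeeze_zero_norm' (a := fun τ => L * (t₀ - τ) ^ (1 - α))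
      · filter_upwards [self_mem_nhdsWithin] with τ hτ
        have hτ' : (0:ℝ) ≤ t₀ - τ := sub_nonneg.2 hτ.2
        have h1 : |G τ| = (t₀ - τ) ^ (-α) * |w τ - w t₀| := by
          rw [hG, abs_mul, abs_of_nonneg (Real.rpow_nonneg hτ' _)]
        rw [Real.norm_eq_abs, h1]
        calc (t₀ - τ) ^ (-α) * |w τ - w t₀|
            ≤ (t₀ - τ) ^ (-α) * (L * (t₀ - τ)) :=
              mul_le_mul_of_nonneg_left (hLip τ hτ) (Real.rpow_nonneg hτ' _)
          _ = L * ((t₀ - τ) ^ (-α) * (t₀ - τ)) := by ring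
          _ = L * (t₀ - τ) ^ (1 - α) := by
              rw [rpow_mul_self hτ' hαne (by intro h; apply hα1.ne; linarith)]
              ring_nf
      · have hc : ContinuousAt (fun τ : ℝ => L * (t₀ - τ) ^ (1 - α)) t₀ :=
          continuousAt_const.mul
            ((continuousAt_const.sub continuousAt_id).rpow_const
              (Or.inr (by linarith)))
        have := hc.tendsto.mono_left (nhdsWithin_le_nhds (s := Set.Icc 0 t₀))
        simpa [Real.zero_rpow (by intro h; apply hα1.ne; linarith : 1 - α ≠ 0)] using this
    · -- x < t₀
      have hxt : t₀ - x ≠ 0 := sub_ne_zero_of_ne hx2.ne'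
      exact (((continuousAt_const.sub continuousAt_id).rpow_const
        (Or.inl hxt)).mul ((hw.continuous.sub continuous_const).continuousAt)).continuousWithinAt
  -- integrability
  have hrpow : IntervalIntegrable (fun τ : ℝ => (t₀ - τ) ^ (-α)) volume 0 t₀ := by
    have h := (intervalIntegrable_rpow' (a := t₀) (b := 0) (r := -α)
      (by linarith)).comp_sub_left t₀
    simpa using h
  have hIntA : IntervalIntegrable A volume 0 t₀ :=
    hrpow.mul_continuousOn hcd.continuousOn
  have hIntB : IntervalIntegrable B volume 0 t₀ := by
    apply IntervalIntegrable.mono_fun (hrpow.const_mul (α * L))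
    · have hres : volume.restrict (Set.uIoc (0:ℝ) t₀) = volume.restrict (Set.Ioo (0:ℝ) t₀) := by
        rw [Set.uIoc_of_le ht₀pos.le]
        exact (Measure.restrict_congr_set Ioo_ae_eq_Ioc).symm
      rw [hres]
      apply ContinuousOn.aestronglyMeasurable _ measurableSet_Ioo
      intro x hx
      have c1 : ContinuousAt (fun τ : ℝ => α * (t₀ - τ) ^ (-α - 1)) x :=
        continuousAt_const.mul ((continuousAt_const.sub continuousAt_id).rpow_const
          (Or.inl (sub_ne_zero_of_ne hx.2.ne')))
      have c2 : ContinuousAt (fun τ : ℝ => w τ - w t₀) x :=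
        (hw.continuous.sub continuous_const).continuousAt
      exact (c1.mul c2).continuousWithinAt
    · filter_upwards [ae_restrict_mem measurableSet_uIoc] with τ hτ
      rw [Set.uIoc_of_le ht₀pos.le] at hτ
      have hτ' : (0:ℝ) ≤ t₀ - τ := sub_nonneg.2 hτ.2
      have hrn : (0:ℝ) ≤ (t₀ - τ) ^ (-α - 1) := Real.rpow_nonneg hτ' _
      rw [Real.norm_eq_abs, Real.norm_eq_abs, hB]
      rw [abs_mul, abs_of_nonneg (mul_nonneg hα0.le hrn)]
      calc α * (t₀ - τ) ^ (-α - 1) * |w τ - w t₀|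
          ≤ α * (t₀ - τ) ^ (-α - 1) * (L * (t₀ - τ)) :=
            mul_le_mul_of_nonneg_left (hLip τ ⟨hτ.1.le, hτ.2⟩)
              (mul_nonneg hα0.le hrn)
        _ = α * L * ((t₀ - τ) ^ (-α - 1) * (t₀ - τ)) := by ring
        _ = α * L * (t₀ - τ) ^ (-α) := by
            rw [rpow_mul_self hτ' (by intro h; apply hα1.ne'; linarith) (by simpa using hαne)]
            ring_nf
        _ ≤ |α * L * (t₀ - τ) ^ (-α)| := le_abs_self _
  -- FTC
  have hFTC : (∫ τ in (0:ℝ)..t₀, (B τ + A τ)) = G t₀ - G 0 :=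
    integral_eq_sub_of_hasDeriv_right_of_le ht₀pos.le hcontG
      (fun x hx => (hderG x hx).hasDerivWithinAt) (hIntB.add hIntA)
  rw [intervalIntegral.integral_add hIntB hIntA, hGt₀] at hFTC
  have hBint : (∫ τ in (0:ℝ)..t₀, B τ) ≤ 0 := by
    have hnn : (0:ℝ) ≤ ∫ τ in (0:ℝ)..t₀, -B τ := by
      apply intervalIntegral.integral_nonneg ht₀pos.le
      intro u hu
      rw [neg_nonneg]
      have h1 : (0:ℝ) ≤ α * (t₀ - u) ^ (-α - 1) :=
        mul_nonneg hα0.le (Real.rpow_nonneg (sub_nonneg.2 hu.2) _)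
      have h2 : w u - w t₀ ≤ 0 :=
        sub_nonpos.2 (hmax u ⟨hu.1, le_trans hu.2 ht₀mem.2⟩)
      exact mul_nonpos_iff.2 (Or.inl ⟨h1, h2⟩)
    rw [intervalIntegral.integral_neg] at hnn
    linarith
  have hG0 : G 0 = t₀ ^ (-α) * (w 0 - w t₀) := by simp [hG]
  have hAint : (0:ℝ) ≤ ∫ τ in (0:ℝ)..t₀, A τ := by
    have hnn : (0:ℝ) ≤ t₀ ^ (-α) * (w t₀ - w 0) :=
      mul_nonneg (Real.rpow_nonneg ht₀pos.le _) (by linarith)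
    nlinarith [hFTC, hBint, hG0]
  -- Caputo derivative nonneg
  have hcap : 0 ≤ caputoDeriv α w t₀ := by
    rw [caputoDeriv]
    have hΓ : 0 < Real.Gamma (1 - α) := Real.Gamma_pos_of_pos (by linarith)
    exact mul_nonneg (by positivity) hAint
  -- deriv nonneg at t₀
  have hd : 0 ≤ deriv w t₀ := by
    have hder := (hdiff t₀).hasDerivAt
    rw [hasDerivAt_iff_tendsto_slope] at hder
    have hmono : Filter.Tendsto (slope w t₀) (nhdsWithin t₀ (Set.Iio t₀)) (nhds (deriv w t₀)) :=
      hder.mono_left (nhdsWithin_mono _ (fun x hx => ne_of_lt hx))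
    refine ge_of_tendsto hmono ?_
    filter_upwards [Ioo_mem_nhdsLT ht₀pos] with x hx
    have h1 : w x ≤ w t₀ := hmax x ⟨hx.1.le, le_trans hx.2.le ht₀mem.2⟩
    rw [slope_comm, slope_def_field]
    exact div_nonneg (by linarith) (by linarith [hx.2])
  have := hineq t₀ ⟨ht₀pos, ht₀mem.2⟩
  nlinarith [mul_nonneg hp₀ hcap, mul_pos hlam hM]
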